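/- Let q ∈ ℕ, Ξ > 0 and ς > 2. Let b, c : ℕ → ℝ^q be sequences of vectors satisfying |b_ℓ|_2 ≤ Ξ(1+ℓ)^{−ς} and |c_ℓ|_2 ≤ Ξ(1+ℓ)^{−ς} for all ℓ ≥ 0. Then for every integer h ≥ 0 the series ∑_{ℓ=0}^∞ ⟨b_ℓ, c_{ℓ+h}⟩ converges absolutely and |∑_{ℓ=0}^∞ ⟨b_ℓ, c_{ℓ+h}⟩| ≤ Ξ² (∑_{ℓ=0}^∞ (1+ℓ)^{−ς}) (1+h)^{−ς}. Consequently, for every integer m ≥ 1, ∑_{h>m} |∑_{ℓ=0}^∞ ⟨b_ℓ, c_{ℓ+h}⟩| ≤ Ξ² (∑_{ℓ=0}^∞ (1+ℓ)^{−ς}) (1+m)^{1−ς}/(ς−1). -/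

import Mathlib

open scoped RealInnerProductSpace

lemma aux_step (ς : ℝ) (hς : 2 < ς) (x : ℝ) (hx : 1 ≤ x) :
    (1 + x) ^ (-ς) ≤ (x ^ (1 - ς) - (x + 1) ^ (1 - ς)) / (ς - 1) := by
  have hx0 : (0:ℝ) < x := by linarith
  have hx1 : (0:ℝ) < x + 1 := by linarith
  set p := ς - 1 with hp_def
  have hp1 : (1:ℝ) ≤ p := by simp [hp_def]; linarith
  have hp0 : (0:ℝ) < p := by linarith
  have hA0 : (0:ℝ) < x ^ p := Real.rpow_pos_of_pos hx0 p
  have hB0 : (0:ℝ) < (x + 1) ^ p := Real.rpow_pos_of_pos hx1 p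
  set A := x ^ p with hA_def
  set B := (x + 1) ^ p with hB_def
  -- Bernoulli
  have hs1 : (-1:ℝ) ≤ 1 / x := le_trans (by norm_num : (-1:ℝ) ≤ 0) (by positivity)
  have hB1 : 1 + p * (1 / x) ≤ (1 + 1 / x) ^ p :=
    one_add_mul_self_le_rpow_one_add hs1 hp1
  have h3 : (1 + 1 / x) ^ p = B / A := by
    rw [show (1 : ℝ) + 1 / x = (x + 1) / x by field_simp]
    exact Real.div_rpow hx1.le hx0.le p
  have h2 : 1 + p / (x + 1) ≤ B / A := by
    refine le_trans ?_ (h3 ▸ hB1)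
    have : p / (x + 1) ≤ p / x := by
      apply div_le_div_of_nonneg_left hp0.le hx0; linarith
    rw [mul_one_div]; linarith
  have h4 : (1 + p / (x + 1)) * A ≤ B := (le_div_iff₀ hA0).mp h2
  have h5 : ((1 + p / (x + 1)) * A) * (x + 1) = A * (x + 1) + p * A := by
    field_simp
  have hkey : p * A ≤ (B - A) * (x + 1) := by
    nlinarith [mul_le_mul_of_nonneg_right h4 hx1.le]
  -- rewrite rpows
  have e1 : (1 + x) ^ (-ς) = 1 / ((x + 1) * B) := by
    rw [add_comm 1 x, show -ς = -p + (-1) by ring, Real.rpow_add hx1,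
      Real.rpow_neg_one, Real.rpow_neg hx1.le]
    field_simp
    rw [← hB_def]
  have e2 : x ^ (1 - ς) = 1 / A := by
    rw [show (1 : ℝ) - ς = -p by ring, Real.rpow_neg hx0.le]; simp; exact hA_def.symm
  have e3 : (x + 1) ^ (1 - ς) = 1 / B := by
    rw [show (1 : ℝ) - ς = -p by ring, Real.rpow_neg hx1.le]; simp; exact hB_def.symm
  rw [e1, e2, e3]
  have hAB : 1 / A - 1 / B = (B - A) / (A * B) := by field_simp
  rw [hAB, div_div, div_le_div_iff₀ (by positivity) (by positivity)]
  nlinarith [mul_le_mul_of_nonneg_right hkey hB0.le]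

lemma aux_summable (ς : ℝ) (hς : 1 < ς) :
    Summable (fun ℓ : ℕ => (1 + (ℓ : ℝ)) ^ (-ς)) := by
  have h : Summable (fun n : ℕ => ((n : ℝ)) ^ (-ς)) :=
    Real.summable_nat_rpow.2 (by linarith)
  have h2 := (summable_nat_add_iff 1).2 h
  refine h2.congr fun n => ?_
  push_cast
  ring_nf

def auxEquiv (m : ℕ) : ℕ ≃ {h : ℕ // m < h} where
  toFun n := ⟨n + m + 1, by omega⟩
  invFun h := (h : ℕ) - (m + 1)
  left_inv n := by dsimp; omega
  right_inv h := by
    rcases h with ⟨h, hh⟩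
    simp only [Subtype.mk.injEq]
    omega

lemma aux_tail (ς : ℝ) (hς : 2 < ς) (m : ℕ) :
    ∑' h : {h : ℕ // m < h}, (1 + ((h : ℕ) : ℝ)) ^ (-ς) ≤
      (1 + (m : ℝ)) ^ (1 - ς) / (ς - 1) := by
  have hsub : Summable (fun h : {h : ℕ // m < h} => (1 + ((h : ℕ) : ℝ)) ^ (-ς)) :=
    (aux_summable ς (by linarith)).subtype _
  rw [← (auxEquiv m).tsum_eq]
  have hsum2 : Summable (fun n : ℕ => (1 + ((((auxEquiv m) n : ℕ)) : ℝ)) ^ (-ς)) :=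
    ((auxEquiv m).summable_iff).2 hsub
  refine Summable.tsum_le_of_sum_le hsum2 fun s => ?_
  obtain ⟨N, hN⟩ := s.exists_nat_subset_range
  have hsub2 : ∑ n ∈ s, (1 + ((((auxEquiv m) n : ℕ)) : ℝ)) ^ (-ς) ≤
      ∑ n ∈ Finset.range N, (1 + ((((auxEquiv m) n : ℕ)) : ℝ)) ^ (-ς) := by
    refine Finset.sum_le_sum_of_subset_of_nonneg hN fun i _ _ => ?_
    positivity
  refine hsub2.trans ?_
  set G : ℕ → ℝ := fun n => ((n + m + 1 : ℕ) : ℝ) ^ (1 - ς) with hG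
  have hstep : ∀ n ∈ Finset.range N, (1 + ((((auxEquiv m) n : ℕ)) : ℝ)) ^ (-ς) ≤
      (G n - G (n + 1)) / (ς - 1) := by
    intro n _
    have hx : (1 : ℝ) ≤ ((n + m + 1 : ℕ) : ℝ) := by
      push_cast; linarith [Nat.cast_nonneg (α := ℝ) n, Nat.cast_nonneg (α := ℝ) m]
    have := aux_step ς hς ((n + m + 1 : ℕ) : ℝ) hx
    simp only [auxEquiv, Equiv.coe_fn_mk, hG]
    push_cast at this ⊢
    convert this using 3 <;> push_cast <;> ring
  refine (Finset.sum_le_sum hstep).trans ?_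
  rw [← Finset.sum_div]
  rw [Finset.sum_range_sub' G N]
  have hG0 : G 0 = (1 + (m : ℝ)) ^ (1 - ς) := by
    simp only [hG]; push_cast; ring_nf
  have hGN : 0 ≤ G N := by simp only [hG]; positivity
  have hp0 : (0:ℝ) < ς - 1 := by linarith
  rw [hG0] at *
  gcongr <;> linarith
theorem stmt1 (q : ℕ) (Ξ ς : ℝ) (hΞ : 0 < Ξ) (hς : 2 < ς)
    (b c : ℕ → EuclideanSpace ℝ (Fin q))
    (hb : ∀ ℓ : ℕ, ‖b ℓ‖ ≤ Ξ * (1 + (ℓ : ℝ)) ^ (-ς))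
    (hc : ∀ ℓ : ℕ, ‖c ℓ‖ ≤ Ξ * (1 + (ℓ : ℝ)) ^ (-ς)) :
    (∀ h : ℕ,
      Summable (fun ℓ : ℕ => |(⟪b ℓ, c (ℓ + h)⟫)|) ∧
      |(∑' ℓ : ℕ, ⟪b ℓ, c (ℓ + h)⟫)| ≤
        Ξ ^ 2 * (∑' ℓ : ℕ, (1 + (ℓ : ℝ)) ^ (-ς)) * (1 + (h : ℝ)) ^ (-ς)) ∧
    (∀ m : ℕ, 1 ≤ m →
      Summable (fun h : {h : ℕ // m < h} => |(∑' ℓ : ℕ, ⟪b ℓ, c (ℓ + (h : ℕ))⟫)|) ∧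
      (∑' h : {h : ℕ // m < h}, |(∑' ℓ : ℕ, ⟪b ℓ, c (ℓ + (h : ℕ))⟫)|) ≤
        Ξ ^ 2 * (∑' ℓ : ℕ, (1 + (ℓ : ℝ)) ^ (-ς)) * (1 + (m : ℝ)) ^ (1 - ς) / (ς - 1)) := by
  have hS : Summable (fun ℓ : ℕ => (1 + (ℓ : ℝ)) ^ (-ς)) :=
    aux_summable ς (by linarith)
  set S : ℝ := ∑' ℓ : ℕ, (1 + (ℓ : ℝ)) ^ (-ς) with hS_def
  have hS0 : 0 ≤ S := tsum_nonneg fun ℓ => by positivity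
  have hterm : ∀ h ℓ : ℕ, |(⟪b ℓ, c (ℓ + h)⟫)| ≤
      Ξ ^ 2 * (1 + (h : ℝ)) ^ (-ς) * (1 + (ℓ : ℝ)) ^ (-ς) := by
    intro h ℓ
    have hXle : (1 + ((ℓ + h : ℕ) : ℝ)) ^ (-ς) ≤ (1 + (h : ℝ)) ^ (-ς) := by
      apply Real.rpow_le_rpow_of_nonpos (by positivity) _ (by linarith)
      push_cast
      linarith [Nat.cast_nonneg (α := ℝ) ℓ]
    calc |(⟪b ℓ, c (ℓ + h)⟫)| ≤ ‖b ℓ‖ * ‖c (ℓ + h)‖ := abs_real_inner_le_norm _ _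
      _ ≤ (Ξ * (1 + (ℓ : ℝ)) ^ (-ς)) * (Ξ * (1 + ((ℓ + h : ℕ) : ℝ)) ^ (-ς)) := by
          apply mul_le_mul (hb ℓ) (hc (ℓ + h)) (norm_nonneg _) (by positivity)
      _ = (Ξ ^ 2 * (1 + (ℓ : ℝ)) ^ (-ς)) * (1 + ((ℓ + h : ℕ) : ℝ)) ^ (-ς) := by ring
      _ ≤ (Ξ ^ 2 * (1 + (ℓ : ℝ)) ^ (-ς)) * (1 + (h : ℝ)) ^ (-ς) := by
          apply mul_le_mul_of_nonneg_left hXle (by positivity)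
      _ = Ξ ^ 2 * (1 + (h : ℝ)) ^ (-ς) * (1 + (ℓ : ℝ)) ^ (-ς) := by ring
  have part1 : ∀ h : ℕ,
      Summable (fun ℓ : ℕ => |(⟪b ℓ, c (ℓ + h)⟫)|) ∧
      |(∑' ℓ : ℕ, ⟪b ℓ, c (ℓ + h)⟫)| ≤ Ξ ^ 2 * S * (1 + (h : ℝ)) ^ (-ς) := by
    intro h
    have hsumb : Summable (fun ℓ : ℕ => Ξ ^ 2 * (1 + (h : ℝ)) ^ (-ς) * (1 + (ℓ : ℝ)) ^ (-ς)) :=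
      hS.mul_left _
    have habs : Summable (fun ℓ : ℕ => |(⟪b ℓ, c (ℓ + h)⟫)|) :=
      Summable.of_nonneg_of_le (fun ℓ => abs_nonneg _) (hterm h) hsumb
    refine ⟨habs, ?_⟩
    have h1 : |(∑' ℓ : ℕ, ⟪b ℓ, c (ℓ + h)⟫)| ≤ ∑' ℓ : ℕ, |(⟪b ℓ, c (ℓ + h)⟫)| := by
      rw [← Real.norm_eq_abs]
      refine (norm_tsum_le_tsum_norm ?_).trans_eq (by simp [Real.norm_eq_abs])
      simpa [Real.norm_eq_abs] using habs
    refine h1.trans ?_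
    calc ∑' ℓ : ℕ, |(⟪b ℓ, c (ℓ + h)⟫)|
        ≤ ∑' ℓ : ℕ, Ξ ^ 2 * (1 + (h : ℝ)) ^ (-ς) * (1 + (ℓ : ℝ)) ^ (-ς) :=
          Summable.tsum_le_tsum (hterm h) habs hsumb
      _ = Ξ ^ 2 * (1 + (h : ℝ)) ^ (-ς) * S := tsum_mul_left
      _ = Ξ ^ 2 * S * (1 + (h : ℝ)) ^ (-ς) := by ring
  refine ⟨part1, ?_⟩
  intro m _
  have hA : ∀ h : ℕ, |(∑' ℓ : ℕ, ⟪b ℓ, c (ℓ + h)⟫)| ≤ Ξ ^ 2 * S * (1 + (h : ℝ)) ^ (-ς) :=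
    fun h => (part1 h).2
  have hsub : Summable (fun h : {h : ℕ // m < h} => (1 + ((h : ℕ) : ℝ)) ^ (-ς)) :=
    hS.subtype _
  have hsumb : Summable (fun h : {h : ℕ // m < h} => Ξ ^ 2 * S * (1 + ((h : ℕ) : ℝ)) ^ (-ς)) :=
    hsub.mul_left _
  have habs : Summable (fun h : {h : ℕ // m < h} => |(∑' ℓ : ℕ, ⟪b ℓ, c (ℓ + (h : ℕ))⟫)|) :=
    Summable.of_nonneg_of_le (fun h => abs_nonneg _) (fun h => hA h) hsumb
  refine ⟨habs, ?_⟩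
  calc (∑' h : {h : ℕ // m < h}, |(∑' ℓ : ℕ, ⟪b ℓ, c (ℓ + (h : ℕ))⟫)|)
      ≤ ∑' h : {h : ℕ // m < h}, Ξ ^ 2 * S * (1 + ((h : ℕ) : ℝ)) ^ (-ς) :=
        Summable.tsum_le_tsum (fun h => hA h) habs hsumb
    _ = Ξ ^ 2 * S * ∑' h : {h : ℕ // m < h}, (1 + ((h : ℕ) : ℝ)) ^ (-ς) := tsum_mul_left
    _ ≤ Ξ ^ 2 * S * ((1 + (m : ℝ)) ^ (1 - ς) / (ς - 1)) :=
        mul_le_mul_of_nonneg_left (aux_tail ς hς m) (by positivity)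
    _ = Ξ ^ 2 * S * (1 + (m : ℝ)) ^ (1 - ς) / (ς - 1) := by ring
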